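/- Every LM-system R is free over its signature: for every n-ary function symbol f, if f(s1,…,sn) and f(t1,…,tn) are terms whose arguments are all in R-normal form and the two terms are joinable modulo R, then si = ti for all i (i.e., the two terms are syntactically equal). -/

import Mathlib

/-! Basic first-order terms, positions, substitutions and rewriting. -/

inductive Term (F : Type) : Type
  | var : Nat → Term F
  | app : F → List (Term F) → Term F

namespace Term

def subst {F : Type} (σ : Nat → Term F) : Term F → Term F
  | var n => σ n
  | app f ts => app f (ts.attach.map fun ⟨t, _⟩ => t.subst σ)

def root {F : Type} : Term F → Option F
  | var _ => none
  | app f _ => some f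

def label {F : Type} : Term F → F ⊕ Nat
  | var n => Sum.inr n
  | app f _ => Sum.inl f

def IsVar {F : Type} : Term F → Prop
  | var _ => True
  | app _ _ => False

def varsL {F : Type} : Term F → List Nat
  | var n => [n]
  | app _ ts => (ts.attach.map fun ⟨t, _⟩ => t.varsL).flatten

end Term

abbrev Rule (F : Type) := Term F × Term F
abbrev TRS (F : Type) := Set (Rule F)

/-- `SubtermAt t p u` : the subterm of `t` at position `p` is `u`. -/
inductive SubtermAt {F : Type} : Term F → List Nat → Term F → Prop
  | here (t : Term F) : SubtermAt t [] t
  | there {f : F} {ts : List (Term F)} {i : Nat} {u : Term F} {p : List Nat} {v : Term F} :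
      ts[i]? = some u → SubtermAt u p v → SubtermAt (Term.app f ts) (i :: p) v

/-- `ReplaceAt t p v t'` : replacing the subterm of `t` at position `p` by `v` yields `t'`. -/
inductive ReplaceAt {F : Type} : Term F → List Nat → Term F → Term F → Prop
  | here (t u : Term F) : ReplaceAt t [] u u
  | there {f : F} {ts : List (Term F)} {i : Nat} {u : Term F} {p : List Nat} {v w : Term F} :
      ts[i]? = some u → ReplaceAt u p v w →
      ReplaceAt (Term.app f ts) (i :: p) v (Term.app f (ts.set i w))

variable {F : Type}

/-- One rewrite step using the given rule (at some position, with some substitution). -/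
def RuleStep (ρ : Rule F) (s t : Term F) : Prop :=
  ∃ (σ : Nat → Term F) (p : List Nat),
    SubtermAt s p (ρ.1.subst σ) ∧ ReplaceAt s p (ρ.2.subst σ) t

def OneStep (R : TRS F) (s t : Term F) : Prop := ∃ ρ ∈ R, RuleStep ρ s t

/-- A rewrite step at the root position. -/
def RootStep (R : TRS F) (s t : Term F) : Prop :=
  ∃ ρ ∈ R, ∃ σ : Nat → Term F, s = ρ.1.subst σ ∧ t = ρ.2.subst σ

def StarRW (R : TRS F) : Term F → Term F → Prop := Relation.ReflTransGen (OneStep R)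
def Plus (R : TRS F) : Term F → Term F → Prop := Relation.TransGen (OneStep R)
/-- Convertibility (the congruence / equational theory generated by `R`). -/
def Conv (R : TRS F) : Term F → Term F → Prop := Relation.EqvGen (OneStep R)
def Joinable (R : TRS F) (s t : Term F) : Prop := ∃ u, StarRW R s u ∧ StarRW R t u
def NormalForm (R : TRS F) (t : Term F) : Prop := ∀ u, ¬ OneStep R t u
/-- `t` is the `R`-normal form of `s`. -/
def NFof (R : TRS F) (s t : Term F) : Prop := StarRW R s t ∧ NormalForm R t
def Terminating (R : TRS F) : Prop := WellFounded (fun a b : Term F => OneStep R b a)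
def Confluent (R : TRS F) : Prop := ∀ s t u, StarRW R s t → StarRW R s u → Joinable R t u
def Convergent (R : TRS F) : Prop := Confluent R ∧ Terminating R

/-- every proper subterm is irreducible -/
def EpsIrreducible (R : TRS F) (t : Term F) : Prop :=
  ∀ p u, SubtermAt t p u → p ≠ [] → NormalForm R u

def InnermostRedex (R : TRS F) (t : Term F) : Prop :=
  EpsIrreducible R t ∧ ¬ NormalForm R t

/-- Forward-closed, via the one-step-to-normal-form characterization. -/
def FCclosed (R : TRS F) : Prop :=
  ∀ t, InnermostRedex R t → ∀ u, NFof R t u → OneStep R t u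

def Unifies (σ : Nat → Term F) (s t : Term F) : Prop := s.subst σ = t.subst σ

def IsMGU (σ : Nat → Term F) (s t : Term F) : Prop :=
  Unifies σ s t ∧ ∀ τ, Unifies τ s t → ∃ δ, ∀ x, τ x = (σ x).subst δ

def IsRenaming (ρ : Nat → Term F) : Prop :=
  ∃ f : Nat → Nat, Function.Injective f ∧ ∀ n, ρ n = Term.var (f n)

/-- Redundancy criterion for an oriented equation `e` whose right-hand side is
reachable from its left-hand side: some proper subterm of the lhs is reducible. -/
def Redundant (R : TRS F) (e : Rule F) : Prop :=
  ∃ p u, p ≠ ([] : List Nat) ∧ SubtermAt e.1 p u ∧ ¬ NormalForm R u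

/-- `R₁ ↝ R₂`: forward overlaps of rules of `R₂` (renamed apart) into
right-hand sides of rules of `R₁`, at non-variable positions, via an mgu. -/
def FStep (R₁ R₂ : TRS F) : TRS F :=
  { e | ∃ (l₁ r₁ l₂ r₂ : Term F) (ρ : Nat → Term F) (p : List Nat) (u : Term F)
          (σ : Nat → Term F) (r₁' : Term F),
      (l₁, r₁) ∈ R₁ ∧ (l₂, r₂) ∈ R₂ ∧ IsRenaming ρ ∧
      SubtermAt r₁ p u ∧ ¬ u.IsVar ∧ IsMGU σ u (l₂.subst ρ) ∧
      ReplaceAt r₁ p (r₂.subst ρ) r₁' ∧ e = (l₁.subst σ, r₁'.subst σ) }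

def FCiter (R : TRS F) : Nat → TRS F
  | 0 => R
  | k + 1 => FCiter R k ∪ { e | e ∈ FStep (FCiter R k) R ∧ ¬ Redundant (FCiter R k) e }

def FCinf (R : TRS F) : TRS F := ⋃ k, FCiter R k

/-- Forward-closed, via the forward-closure construction: `FC(R) = R`. -/
def ForwardClosedFC (R : TRS F) : Prop := FCinf R = R

/-- `RHS(R)`: `R` together with the conclusions of right-hand-side critical
pair inferences (second rule renamed apart). -/
def RHSset (R : TRS F) : TRS F :=
  R ∪ { e | ∃ (s t u₀ v₀ : Term F) (ρ σ : Nat → Term F), (s, t) ∈ R ∧ (u₀, v₀) ∈ R ∧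
        IsRenaming ρ ∧ IsMGU σ t (v₀.subst ρ) ∧
        s.subst σ ≠ (u₀.subst ρ).subst σ ∧ e = (s.subst σ, (u₀.subst ρ).subst σ) }

/-- the (unordered) pairs of root symbols of two equations coincide -/
def RootPairSimilar (e₁ e₂ : Rule F) : Prop :=
  (e₁.1.root = e₂.1.root ∧ e₁.2.root = e₂.2.root) ∨
  (e₁.1.root = e₂.2.root ∧ e₁.2.root = e₂.1.root)

def QuasiDet (E : TRS F) : Prop :=
  (∀ e ∈ E, ¬ e.1.IsVar ∧ ¬ e.2.IsVar) ∧
  (∀ e ∈ E, e.1.root ≠ e.2.root) ∧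
  (∀ e₁ ∈ E, ∀ e₂ ∈ E, e₁ ≠ e₂ → ¬ RootPairSimilar e₁ e₂)

def HasRootPairRepetition (E : TRS F) : Prop :=
  ∃ e₁ ∈ E, ∃ e₂ ∈ E, e₁ ≠ e₂ ∧ RootPairSimilar e₁ e₂

def VarPreserving (R : TRS F) : Prop :=
  ∀ e ∈ R, ∀ n, n ∈ Term.varsL e.1 ↔ n ∈ Term.varsL e.2

def RightReduced (R : TRS F) : Prop := ∀ e ∈ R, NormalForm R e.2

def AlmostLeftReduced (R : TRS F) : Prop :=
  ¬ ∃ (l₁ r₁ l₂ r₂ : Term F) (p : List Nat) (u : Term F) (σ : Nat → Term F),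
      (l₁, r₁) ∈ R ∧ (l₂, r₂) ∈ R ∧ p ≠ [] ∧ SubtermAt l₁ p u ∧ u = l₂.subst σ

def NonSubtermCollapsing (R : TRS F) : Prop :=
  ¬ ∃ (t u : Term F) (p : List Nat), p ≠ [] ∧ SubtermAt u p t ∧ Conv R t u

structure LMSystem (R : TRS F) : Prop where
  convergent : Convergent R
  almostLeftReduced : AlmostLeftReduced R
  rightReduced : RightReduced R
  nonCollapsing : NonSubtermCollapsing R
  forwardClosed : FCclosed R
  quasiDet : QuasiDet (RHSset R)

/-- the symbol (function symbol or variable) of a term at a position, if defined -/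
def labelAt {F : Type} : List Nat → Term F → Option (F ⊕ Nat)
  | [], t => some t.label
  | i :: p, Term.app _ ts => (ts[i]?).bind (labelAt p)
  | _ :: _, Term.var _ => none

/-- outermost distinguishing position -/
def ODP (s t : Term F) (p : List Nat) : Prop :=
  (labelAt p s ≠ none ∨ labelAt p t ≠ none) ∧
  labelAt p s ≠ labelAt p t ∧
  ∀ q, q <+: p → q ≠ p → labelAt q s = labelAt q t


section Aux

theorem subst_app (σ : Nat → Term F) (f : F) (ts : List (Term F)) :
    (Term.app f ts).subst σ = Term.app f (ts.map (·.subst σ)) := by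
  rw [Term.subst]
  congr 1
  simp [List.map_attach_eq_pmap, List.pmap_eq_map]

theorem subtermAt_unique {t : Term F} {p : List Nat} {u v : Term F}
    (h1 : SubtermAt t p u) (h2 : SubtermAt t p v) : u = v := by
  induction h1 with
  | here => cases h2; rfl
  | there hget hsub ih =>
    cases h2 with
    | there hget' hsub' =>
      rw [hget] at hget'
      cases hget'
      exact ih hsub'

theorem SubtermAt.substSub {t : Term F} {p : List Nat} {u : Term F} (σ : Nat → Term F)
    (h : SubtermAt t p u) : SubtermAt (t.subst σ) p (u.subst σ) := by
  induction h with
  | here => exact .here _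
  | there hget hsub ih =>
    rw [subst_app]
    exact .there (by rw [List.getElem?_map, hget]; rfl) ih

theorem SubtermAt.comp {t : Term F} {p q : List Nat} {u v : Term F}
    (h1 : SubtermAt t p u) (h2 : SubtermAt u q v) : SubtermAt t (p ++ q) v := by
  induction h1 with
  | here => exact h2
  | there hget hsub ih => exact .there hget (ih h2)

theorem app_inj {F : Type} {f g : F} {ls ms : List (Term F)}
    (h : Term.app f ls = Term.app g ms) : ls = ms := by
  injection h

theorem subtermAt_nil {t u : Term F} (h : SubtermAt t [] u) : t = u := by
  cases h; rfl

theorem replaceAt_nil {t v w : Term F} (h : ReplaceAt t [] v w) : w = v := by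
  cases h; rfl

theorem replaceAt_exists {t : Term F} {p : List Nat} {u : Term F}
    (h1 : SubtermAt t p u) : ∀ {q : List Nat} {v w : Term F},
    ReplaceAt u q v w → ∃ t', ReplaceAt t (p ++ q) v t' := by
  induction h1 with
  | here => exact fun h2 => ⟨_, h2⟩
  | there hget hsub ih =>
    intro q v w h2
    obtain ⟨t', ht'⟩ := ih h2
    exact ⟨_, .there hget ht'⟩

theorem onestep_lift {R : TRS F} {t : Term F} {p : List Nat} {u v : Term F}
    (h : SubtermAt t p u) (hstep : OneStep R u v) : ∃ t', OneStep R t t' := by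
  obtain ⟨ρ, hρ, σ, q, hsub, hrep⟩ := hstep
  obtain ⟨t', ht'⟩ := replaceAt_exists h hrep
  exact ⟨t', ρ, hρ, σ, p ++ q, h.comp hsub, ht'⟩

theorem nf_subterm {R : TRS F} {t : Term F} (ht : NormalForm R t)
    {p : List Nat} {u : Term F} (h : SubtermAt t p u) : NormalForm R u := by
  intro v hv
  obtain ⟨t', ht'⟩ := onestep_lift h hv
  exact ht t' ht'

theorem nf_exists {R : TRS F} (hterm : Terminating R) (t : Term F) :
    ∃ u, NFof R t u := by
  induction t using hterm.induction with
  | _ t ih =>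
    by_cases h : NormalForm R t
    · exact ⟨t, .refl, h⟩
    · simp only [NormalForm, not_forall, not_not] at h
      obtain ⟨u, hu⟩ := h
      obtain ⟨w, hw1, hw2⟩ := ih u hu
      exact ⟨w, .head hu hw1, hw2⟩

theorem star_of_nf {R : TRS F} {s u : Term F} (hs : NormalForm R s)
    (h : StarRW R s u) : u = s := by
  rcases (Relation.reflTransGen_iff_eq (fun v hv => hs v hv)).mp h with rfl
  rfl

theorem root_subst {t : Term F} (h : ¬ t.IsVar) (σ : Nat → Term F) :
    (t.subst σ).root = t.root := by
  cases t with
  | var n => exact absurd trivial h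
  | app f ts => rw [subst_app]; rfl

theorem mem_varsL_subterm : ∀ (t : Term F) (x : Nat), x ∈ t.varsL →
    ∃ p, SubtermAt t p (Term.var x)
  | Term.var n, x, h => by
      simp [Term.varsL] at h
      exact h ▸ ⟨[], .here _⟩
  | Term.app f ts, x, h => by
      rw [Term.varsL] at h
      simp only [List.mem_flatten, List.mem_map, List.mem_attach, true_and,
        Subtype.exists] at h
      obtain ⟨l, ⟨u, hu, rfl⟩, hx⟩ := h
      obtain ⟨p, hp⟩ := mem_varsL_subterm u x hx
      obtain ⟨i, hi⟩ := List.getElem?_of_mem hu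
      exact ⟨i :: p, .there hi hp⟩
termination_by t => sizeOf t
decreasing_by
  have := List.sizeOf_lt_of_mem hu
  simp; omega

theorem subst_congr : ∀ (t : Term F) (σ₁ σ₂ : Nat → Term F),
    (∀ x ∈ t.varsL, σ₁ x = σ₂ x) → t.subst σ₁ = t.subst σ₂
  | Term.var n, σ₁, σ₂, h => by
      simpa [Term.subst] using h n (by simp [Term.varsL])
  | Term.app f ts, σ₁, σ₂, h => by
      rw [subst_app, subst_app]
      congr 1
      apply List.map_congr_left
      intro u hu
      apply subst_congr u σ₁ σ₂
      intro x hx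
      apply h
      rw [Term.varsL]
      simp only [List.mem_flatten, List.mem_map, List.mem_attach, true_and,
        Subtype.exists]
      exact ⟨u.varsL, ⟨u, hu, rfl⟩, hx⟩
termination_by t => sizeOf t
decreasing_by
  have := List.sizeOf_lt_of_mem hu
  simp; omega

theorem sigma_eq_of_subst_eq {t : Term F} {σ₁ σ₂ : Nat → Term F}
    (h : t.subst σ₁ = t.subst σ₂) {x : Nat} (hx : x ∈ t.varsL) : σ₁ x = σ₂ x := by
  obtain ⟨p, hp⟩ := mem_varsL_subterm t x hx
  have h1 := hp.substSub σ₁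
  have h2 := hp.substSub σ₂
  simp only [Term.subst] at h1 h2
  rw [h] at h1
  exact subtermAt_unique h1 h2

/-- An `EpsIrreducible` term rewrites only at the root. -/
theorem step_of_epsIrr {R : TRS F} {t u : Term F} (heps : EpsIrreducible R t)
    (h : OneStep R t u) :
    ∃ l r σ, (l, r) ∈ R ∧ t = Term.subst σ l ∧ u = Term.subst σ r := by
  obtain ⟨⟨l, r⟩, hρ, σ, p, hsub, hrep⟩ := h
  rcases eq_or_ne p [] with rfl | hp
  · exact ⟨l, r, σ, hρ, subtermAt_nil hsub, replaceAt_nil hrep⟩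
  · exfalso
    exact heps p _ hsub hp _ ⟨(l, r), hρ, σ, [], .here _, .here _ _⟩

end Aux

/-- every LM-system is free over its signature: joinable terms
`f(s₁,…,sₙ)` and `f(t₁,…,tₙ)` with all arguments in normal form are equal. -/
theorem lm_free_over_signature {F : Type} (R : TRS F) (hlm : LMSystem R)
    (f : F) (ss ts : List (Term F)) (hlen : ss.length = ts.length)
    (hss : ∀ u ∈ ss, NormalForm R u) (hts : ∀ u ∈ ts, NormalForm R u)
    (hj : Joinable R (Term.app f ss) (Term.app f ts)) :
    ss = ts := by
  have hconv : Convergent R := hlm.convergent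
  have hRsub : R ⊆ RHSset R := Set.subset_union_left
  -- subterm-irreducibility of the two terms
  have heps : ∀ (ls : List (Term F)), (∀ u ∈ ls, NormalForm R u) →
      EpsIrreducible R (Term.app f ls) := by
    intro ls hls p u hsub hp
    cases hsub with
    | here => exact absurd rfl hp
    | there hget hsub' =>
      exact nf_subterm (hls _ (List.mem_of_getElem? hget)) hsub'
  -- key: a non-normal term with irreducible arguments root-rewrites to its NF
  have key : ∀ (ls : List (Term F)) (w : Term F), (∀ u ∈ ls, NormalForm R u) →
      ¬ NormalForm R (Term.app f ls) → NFof R (Term.app f ls) w →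
      ∃ l r σ, (l, r) ∈ R ∧ Term.app f ls = Term.subst σ l ∧ w = Term.subst σ r := by
    intro ls w hls hnf hNF
    have hstep := hlm.forwardClosed _ ⟨heps ls hls, hnf⟩ w hNF
    exact step_of_epsIrr (heps ls hls) hstep
  obtain ⟨u, hsu, htu⟩ := hj
  obtain ⟨w, huw, hwNF⟩ := nf_exists hconv.2 u
  have hsw : NFof R (Term.app f ss) w := ⟨hsu.trans huw, hwNF⟩
  have htw : NFof R (Term.app f ts) w := ⟨htu.trans huw, hwNF⟩
  -- a mixed case is impossible
  have mixed : ∀ (ls₁ ls₂ : List (Term F)), (∀ u ∈ ls₂, NormalForm R u) →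
      NormalForm R (Term.app f ls₁) → ¬ NormalForm R (Term.app f ls₂) →
      NFof R (Term.app f ls₁) w → NFof R (Term.app f ls₂) w → False := by
    intro ls₁ ls₂ hls₂ h₁ h₂ hw₁ hw₂
    have hws : w = Term.app f ls₁ := star_of_nf h₁ hw₁.1
    obtain ⟨l, r, σ, hmem, heq₁, heq₂⟩ := key ls₂ w hls₂ h₂ hw₂
    obtain ⟨hnl, hnr⟩ := hlm.quasiDet.1 (l, r) (hRsub hmem)
    have hne := hlm.quasiDet.2.1 (l, r) (hRsub hmem)
    apply hne
    have e1 : l.root = some f := by rw [← root_subst hnl σ, ← heq₁]; rfl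
    have e2 : r.root = some f := by rw [← root_subst hnr σ, ← heq₂, hws]; rfl
    rw [show (l, r).1 = l from rfl, show (l, r).2 = r from rfl, e1, e2]
  by_cases hs : NormalForm R (Term.app f ss) <;>
    by_cases ht : NormalForm R (Term.app f ts)
  · -- both normal forms
    exact app_inj ((star_of_nf hs hsu).symm.trans (star_of_nf ht htu))
  · exact absurd (mixed ss ts hts hs ht hsw htw) not_false
  · exact absurd (mixed ts ss hss ht hs htw hsw) not_false
  · -- both reducible: each root-rewrites to w in one step
    obtain ⟨l₁, r₁, σ₁, hmem₁, hl₁, hr₁⟩ := key ss w hss hs hsw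
    obtain ⟨l₂, r₂, σ₂, hmem₂, hl₂, hr₂⟩ := key ts w hts ht htw
    obtain ⟨hnl₁, hnr₁⟩ := hlm.quasiDet.1 (l₁, r₁) (hRsub hmem₁)
    obtain ⟨hnl₂, hnr₂⟩ := hlm.quasiDet.1 (l₂, r₂) (hRsub hmem₂)
    -- the two rules coincide
    have hrule : (l₁, r₁) = (l₂, r₂) := by
      by_contra hne
      apply hlm.quasiDet.2.2 (l₁, r₁) (hRsub hmem₁) (l₂, r₂) (hRsub hmem₂) hne
      left
      constructor
      · show l₁.root = l₂.root
        rw [← root_subst hnl₁ σ₁, ← root_subst hnl₂ σ₂, ← hl₁, ← hl₂]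
        rfl
      · show r₁.root = r₂.root
        rw [← root_subst hnr₁ σ₁, ← root_subst hnr₂ σ₂, ← hr₁, ← hr₂]
    obtain ⟨rfl, rfl⟩ : l₁ = l₂ ∧ r₁ = r₂ := by
      constructor
      · exact congrArg Prod.fst hrule
      · exact congrArg Prod.snd hrule
    -- σ₁ and σ₂ agree on all variables of l₁
    have hagree : ∀ x ∈ l₁.varsL, σ₁ x = σ₂ x := by
      intro x hx
      by_cases hxr : x ∈ r₁.varsL
      · have heq : Term.subst σ₁ r₁ = Term.subst σ₂ r₁ := by rw [← hr₁, ← hr₂]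
        exact sigma_eq_of_subst_eq heq hxr
      · -- a variable of the lhs missing from the rhs contradicts non-collapsingness
        exfalso
        apply hlm.nonCollapsing
        set τ : Nat → Term F := fun y => if y = x then Term.app f ts else σ₂ y with hτ
        have hrτ : Term.subst τ r₁ = Term.subst σ₂ r₁ :=
          subst_congr _ _ _ (fun y hy => if_neg (by rintro rfl; exact hxr hy))
        have hwτ : w = Term.subst τ r₁ := by rw [hrτ, hr₂]
        have hstep1 : OneStep R (Term.subst τ l₁) w :=
          ⟨(l₁, r₁), hmem₁, τ, [], .here _, hwτ ▸ ReplaceAt.here _ _⟩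
        have hstep2 : OneStep R (Term.app f ts) w :=
          ⟨(l₁, r₁), hmem₂, σ₂, [], hl₂ ▸ SubtermAt.here _, hr₂ ▸ ReplaceAt.here _ _⟩
        obtain ⟨p, hp⟩ := mem_varsL_subterm l₁ x hx
        have hpne : p ≠ [] := by
          rintro rfl
          rw [subtermAt_nil hp] at hnl₁
          exact hnl₁ trivial
        have hsubτ : SubtermAt (Term.subst τ l₁) p (Term.app f ts) := by
          have := hp.substSub τ
          simpa [Term.subst, hτ] using this
        refine ⟨Term.app f ts, Term.subst τ l₁, p, hpne, hsubτ, ?_⟩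
        exact Relation.EqvGen.trans _ _ _ (.rel _ _ hstep2) (.symm _ _ (.rel _ _ hstep1))
    apply app_inj (g := f)
    rw [hl₁, hl₂]
    exact subst_congr _ _ _ hagree
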